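/- Let a, b, c, d, a', b', c', d' be an enumeration of the eight vertices of CQ_3 such that each of the sets {a, b, c, d}, {a', b', c', d'}, {a, b, a', b'} and {c, d, c', d'} induces a 4-cycle in CQ_3, with ⟨{a, b, c, d}⟩ being the cycle a-b-c-d-a and ⟨{a', b', c', d'}⟩ being the cycle a'-b'-c'-d'-a'. Then either all four of aa', bb', cd', dc' are edges of CQ_3, or all four of ab', ba', cc', dd' are edges of CQ_3. -/

import Mathlib

/-- Vertices of the 3-dimensional cubes: binary strings `x1x2x3` of length 3. -/
abbrev Vtx3 := Bool × Bool × Bool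

/-- The 12 edges of the 3-dimensional crossed cube `CQ_3`. -/
def cq3EdgeList : List (Vtx3 × Vtx3) :=
  [ ((false,false,false),(false,false,true)),
    ((false,true,false),(false,true,true)),
    ((true,false,false),(true,false,true)),
    ((true,true,false),(true,true,true)),
    ((false,false,false),(false,true,false)),
    ((false,false,true),(false,true,true)),
    ((true,false,false),(true,true,false)),
    ((true,false,true),(true,true,true)),
    ((false,false,false),(true,false,false)),
    ((false,true,false),(true,true,false)),
    ((false,false,true),(true,true,true)),
    ((false,true,true),(true,false,true)) ]

/-- The 3-dimensional crossed cube `CQ_3`. -/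
def CQ3 : SimpleGraph Vtx3 where
  Adj u v := (u, v) ∈ cq3EdgeList ∨ (v, u) ∈ cq3EdgeList
  symm := ⟨fun _ _ h => Or.symm h⟩
  loopless := by
    constructor
    intro x
    revert x
    decide

instance : DecidableRel CQ3.Adj :=
  fun u v => inferInstanceAs (Decidable ((u, v) ∈ cq3EdgeList ∨ (v, u) ∈ cq3EdgeList))


/-- All ordered 4-cycles `(a,b,c,d)` of `CQ_3`. -/
def cq3Quads : List (Vtx3 × Vtx3 × Vtx3 × Vtx3) :=
  [
    ((false,false,false), (false,false,true), (false,true,true), (false,true,false)),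
    ((false,false,false), (false,true,false), (false,true,true), (false,false,true)),
    ((false,false,false), (false,true,false), (true,true,false), (true,false,false)),
    ((false,false,false), (true,false,false), (true,true,false), (false,true,false)),
    ((false,false,true), (false,false,false), (false,true,false), (false,true,true)),
    ((false,false,true), (false,true,true), (false,true,false), (false,false,false)),
    ((false,false,true), (false,true,true), (true,false,true), (true,true,true)),
    ((false,false,true), (true,true,true), (true,false,true), (false,true,true)),
    ((false,true,false), (false,false,false), (false,false,true), (false,true,true)),
    ((false,true,false), (false,false,false), (true,false,false), (true,true,false)),
    ((false,true,false), (false,true,true), (false,false,true), (false,false,false)),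
    ((false,true,false), (true,true,false), (true,false,false), (false,false,false)),
    ((false,true,true), (false,false,true), (false,false,false), (false,true,false)),
    ((false,true,true), (false,false,true), (true,true,true), (true,false,true)),
    ((false,true,true), (false,true,false), (false,false,false), (false,false,true)),
    ((false,true,true), (true,false,true), (true,true,true), (false,false,true)),
    ((true,false,false), (false,false,false), (false,true,false), (true,true,false)),
    ((true,false,false), (true,false,true), (true,true,true), (true,true,false)),
    ((true,false,false), (true,true,false), (false,true,false), (false,false,false)),
    ((true,false,false), (true,true,false), (true,true,true), (true,false,true)),
    ((true,false,true), (false,true,true), (false,false,true), (true,true,true)),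
    ((true,false,true), (true,false,false), (true,true,false), (true,true,true)),
    ((true,false,true), (true,true,true), (false,false,true), (false,true,true)),
    ((true,false,true), (true,true,true), (true,true,false), (true,false,false)),
    ((true,true,false), (false,true,false), (false,false,false), (true,false,false)),
    ((true,true,false), (true,false,false), (false,false,false), (false,true,false)),
    ((true,true,false), (true,false,false), (true,false,true), (true,true,true)),
    ((true,true,false), (true,true,true), (true,false,true), (true,false,false)),
    ((true,true,true), (false,false,true), (false,true,true), (true,false,true)),
    ((true,true,true), (true,false,true), (false,true,true), (false,false,true)),
    ((true,true,true), (true,false,true), (true,false,false), (true,true,false)),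
    ((true,true,true), (true,true,false), (true,false,false), (true,false,true)) ]

def cq3Verts : List Vtx3 :=
  [(false,false,false),(false,false,true),(false,true,false),(false,true,true),
   (true,false,false),(true,false,true),(true,true,false),(true,true,true)]

lemma mem_verts : ∀ v : Vtx3, v ∈ cq3Verts := by decide

set_option synthInstance.maxHeartbeats 2000000 in
set_option synthInstance.maxSize 5000 in
set_option maxRecDepth 4000 in
set_option maxHeartbeats 4000000 in
lemma mem_quads : ∀ a ∈ cq3Verts, ∀ b ∈ cq3Verts, ∀ c ∈ cq3Verts, ∀ d ∈ cq3Verts,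
    CQ3.Adj a b → CQ3.Adj b c → CQ3.Adj c d → CQ3.Adj d a →
    ¬CQ3.Adj a c → ¬CQ3.Adj b d → a ≠ c → b ≠ d →
    (a, b, c, d) ∈ cq3Quads := by decide

set_option synthInstance.maxHeartbeats 2000000 in
set_option synthInstance.maxSize 5000 in
def cq3Guard (p q : Vtx3 × Vtx3 × Vtx3 × Vtx3) : Prop :=
  (CQ3.Adj p.1 q.1 ∨ CQ3.Adj p.1 q.2.1) ∧ (CQ3.Adj p.2.1 q.1 ∨ CQ3.Adj p.2.1 q.2.1) ∧
      p.1 ≠ q.1 ∧ p.1 ≠ q.2.1 ∧ p.1 ≠ q.2.2.1 ∧ p.1 ≠ q.2.2.2 ∧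
      p.2.1 ≠ q.1 ∧ p.2.1 ≠ q.2.1 ∧ p.2.1 ≠ q.2.2.1 ∧ p.2.1 ≠ q.2.2.2 ∧
      p.2.2.1 ≠ q.1 ∧ p.2.2.1 ≠ q.2.1 ∧ p.2.2.1 ≠ q.2.2.1 ∧ p.2.2.1 ≠ q.2.2.2 ∧
      p.2.2.2 ≠ q.1 ∧ p.2.2.2 ≠ q.2.1 ∧ p.2.2.2 ≠ q.2.2.1 ∧ p.2.2.2 ≠ q.2.2.2

set_option synthInstance.maxHeartbeats 2000000 in
set_option synthInstance.maxSize 5000 in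
def cq3Concl (p q : Vtx3 × Vtx3 × Vtx3 × Vtx3) : Prop :=
  (CQ3.Adj p.1 q.1 ∧ CQ3.Adj p.2.1 q.2.1 ∧ CQ3.Adj p.2.2.1 q.2.2.2 ∧ CQ3.Adj p.2.2.2 q.2.2.1) ∨
      (CQ3.Adj p.1 q.2.1 ∧ CQ3.Adj p.2.1 q.1 ∧ CQ3.Adj p.2.2.1 q.2.2.1 ∧ CQ3.Adj p.2.2.2 q.2.2.2)

instance : ∀ p q, Decidable (cq3Guard p q) := fun p q => by unfold cq3Guard; infer_instance
instance : ∀ p q, Decidable (cq3Concl p q) := fun p q => by unfold cq3Concl; infer_instance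

def cq3Checker : Bool :=
  cq3Quads.all fun p => cq3Quads.all fun q =>
    !(decide (cq3Guard p q)) || decide (cq3Concl p q)

set_option maxRecDepth 2000 in
lemma cq3Checker_true : cq3Checker = true := by decide

lemma cq3_key : ∀ p ∈ cq3Quads, ∀ q ∈ cq3Quads, cq3Guard p q → cq3Concl p q := by
  intro p hp q hq hg
  have h := cq3Checker_true
  rw [cq3Checker, List.all_eq_true] at h
  have h2 := h p hp
  rw [List.all_eq_true] at h2
  have h3 := h2 q hq
  simp only [Bool.or_eq_true, Bool.not_eq_true', decide_eq_false_iff_not,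
    decide_eq_true_eq] at h3
  rcases h3 with h3 | h3
  · exact absurd hg h3
  · exact h3

/-- every vertex of a set inducing a 4-cycle has two distinct neighbors in the set -/
lemma two_nbrs (S : Set Vtx3) (f : CQ3.induce S ≃g SimpleGraph.cycleGraph 4)
    (v : Vtx3) (hv : v ∈ S) :
    ∃ u w : Vtx3, u ≠ w ∧ u ∈ S ∧ w ∈ S ∧ CQ3.Adj v u ∧ CQ3.Adj v w := by
  have hc : ∀ x : Fin 4, ∃ y z : Fin 4, y ≠ z ∧
      (SimpleGraph.cycleGraph 4).Adj x y ∧ (SimpleGraph.cycleGraph 4).Adj x z := by decide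
  obtain ⟨y, z, hyz, hy, hz⟩ := hc (f ⟨v, hv⟩)
  refine ⟨(f.symm y : S), (f.symm z : S), ?_, (f.symm y).2, (f.symm z).2, ?_, ?_⟩
  · intro h
    exact hyz (f.symm.injective (Subtype.ext h))
  · have h2 := f.symm.map_adj_iff.mpr hy
    rw [RelIso.symm_apply_apply] at h2
    exact h2
  · have h2 := f.symm.map_adj_iff.mpr hz
    rw [RelIso.symm_apply_apply] at h2
    exact h2

lemma atleast_one (x y A B : Vtx3) (hxy : x ≠ y)
    (f : CQ3.induce ({x, y, A, B} : Set Vtx3) ≃g SimpleGraph.cycleGraph 4) :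
    CQ3.Adj x A ∨ CQ3.Adj x B := by
  obtain ⟨u, w, huw, hu, hw, hau, haw⟩ :=
    two_nbrs ({x, y, A, B} : Set Vtx3) f x (by simp)
  simp only [Set.mem_insert_iff, Set.mem_singleton_iff] at hu hw
  rcases hu with h | h | h | h
  · subst h; exact absurd hau (CQ3.loopless.irrefl _)
  · rcases hw with h2 | h2 | h2 | h2
    · subst h2; exact absurd haw (CQ3.loopless.irrefl _)
    · exact absurd (h.trans h2.symm) huw
    · subst h2; exact Or.inl haw
    · subst h2; exact Or.inr haw
  · subst h; exact Or.inl hau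
  · subst h; exact Or.inr hau

/-- If `a, b, c, d, a', b', c', d'` is an enumeration of the eight vertices of
`CQ_3` such that `{a,b,c,d}`, `{a',b',c',d'}`, `{a,b,a',b'}` and `{c,d,c',d'}`
each induce a 4-cycle, where `⟨{a,b,c,d}⟩` is the cycle `a-b-c-d-a` and
`⟨{a',b',c',d'}⟩` is the cycle `a'-b'-c'-d'-a'`, then either all of
`aa', bb', cd', dc'` are edges, or all of `ab', ba', cc', dd'` are edges. -/
theorem cq3_matching_structure (a b c d a' b' c' d' : Vtx3)
    (henum : ([a, b, c, d, a', b', c', d'] : List Vtx3).Nodup)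
    (hcyc : CQ3.Adj a b ∧ CQ3.Adj b c ∧ CQ3.Adj c d ∧ CQ3.Adj d a ∧
      ¬CQ3.Adj a c ∧ ¬CQ3.Adj b d)
    (hcyc' : CQ3.Adj a' b' ∧ CQ3.Adj b' c' ∧ CQ3.Adj c' d' ∧ CQ3.Adj d' a' ∧
      ¬CQ3.Adj a' c' ∧ ¬CQ3.Adj b' d')
    (h1 : Nonempty (CQ3.induce ({a, b, c, d} : Set Vtx3) ≃g SimpleGraph.cycleGraph 4))
    (h2 : Nonempty (CQ3.induce ({a', b', c', d'} : Set Vtx3) ≃g SimpleGraph.cycleGraph 4))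
    (h3 : Nonempty (CQ3.induce ({a, b, a', b'} : Set Vtx3) ≃g SimpleGraph.cycleGraph 4))
    (h4 : Nonempty (CQ3.induce ({c, d, c', d'} : Set Vtx3) ≃g SimpleGraph.cycleGraph 4)) :
    (CQ3.Adj a a' ∧ CQ3.Adj b b' ∧ CQ3.Adj c d' ∧ CQ3.Adj d c') ∨
    (CQ3.Adj a b' ∧ CQ3.Adj b a' ∧ CQ3.Adj c c' ∧ CQ3.Adj d d') := by
  obtain ⟨hab, hbc, hcd, hda, hac, hbd⟩ := hcyc
  obtain ⟨hab', hbc', hcd', hda', hac', hbd'⟩ := hcyc'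
  obtain ⟨f⟩ := h3
  simp only [List.nodup_cons, List.mem_cons, List.mem_singleton,
    List.not_mem_nil, or_false, not_or, List.nodup_nil, and_true] at henum
  obtain ⟨⟨hab1, hac1, had1, haa1, hab2, hac2, had2⟩,
    ⟨hbc1, hbd1, hba1, hbb1, hbc2, hbd2⟩,
    ⟨hcd1, hca1, hcb1, hcc1, hcd2⟩,
    ⟨hda1, hdb1, hdc1, hdd1⟩,
    ⟨hA1, hA2, hA3⟩, ⟨hB1, hB2⟩, hC1, _⟩ := henum
  have hxa : CQ3.Adj a a' ∨ CQ3.Adj a b' := atleast_one a b a' b' hab1 f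
  have f' : CQ3.induce ({b, a, a', b'} : Set Vtx3) ≃g SimpleGraph.cycleGraph 4 := by
    have : ({b, a, a', b'} : Set Vtx3) = ({a, b, a', b'} : Set Vtx3) := by
      ext z; simp; tauto
    rw [this]; exact f
  have hxb : CQ3.Adj b a' ∨ CQ3.Adj b b' := atleast_one b a a' b' (Ne.symm hab1) f'
  have := cq3_key (a, b, c, d)
    (mem_quads a (mem_verts a) b (mem_verts b) c (mem_verts c) d (mem_verts d)
      hab hbc hcd hda hac hbd hac1 hbd1)
    (a', b', c', d')
    (mem_quads a' (mem_verts a') b' (mem_verts b') c' (mem_verts c') d' (mem_verts d')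
      hab' hbc' hcd' hda' hac' hbd' hA2 hB2)
    ⟨hxa, hxb,
     haa1, hab2, hac2, had2, hba1, hbb1, hbc2, hbd2,
     hca1, hcb1, hcc1, hcd2, hda1, hdb1, hdc1, hdd1⟩
  exact this
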